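/- With the reflection extension â(t,x) = a(φ(t), Φ(x)) of a function a on P = (0,1)^{d+1}, for every parabolic box Q = (s,s+ρ²) × C with ρ ≤ 1, there exists a parabolic box Q̂ = (t₀ - ρ²/2, t₀ + ρ²/2) × Ĉ contained in [0,1]^{d+1} of the same scale ρ such that ∫_{Q^z}∫_C∫_C |â(t,x) - â(t,y)| dx dy dt ≤ 2^{2d+1} ∫_{Q̂^z}∫_{Ĉ}∫_{Ĉ} |a(t,x) - a(t,y)| dx dy dt. -/

import Mathlib

open MeasureTheory Set

/-- The open cube of side `ρ` based at `c` in `ℝ^d`. -/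
def cube (d : ℕ) (c : Fin d → ℝ) (ρ : ℝ) : Set (Fin d → ℝ) :=
  Set.univ.pi fun i => Set.Ioo (c i) (c i + ρ)

/-- The unit parabolic box `P = (0,1)^{d+1}`. -/
def unitBox (d : ℕ) : Set (ℝ × (Fin d → ℝ)) :=
  Set.Ioo (0:ℝ) 1 ×ˢ cube d (fun _ => 0) 1


section helpers
variable {φ : ℝ → ℝ}

lemma phi_on_left (h1 : ∀ t ∈ Set.Icc (0:ℝ) 1, φ t = t) (h3 : ∀ t : ℝ, φ (t + 2) = φ t)
    (k : ℤ) {t : ℝ} (ht1 : 2*(k:ℝ) ≤ t) (ht2 : t ≤ 2*(k:ℝ)+1) : φ t = t - 2*k := by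
  have hper : Function.Periodic φ 2 := h3
  have h := (hper.sub_int_mul_eq (x := t) k).symm
  rw [h, h1 _ ⟨by linarith, by linarith⟩]; ring

lemma phi_on_right (h2 : ∀ t ∈ Set.Icc (1:ℝ) 2, φ t = 2 - t) (h3 : ∀ t : ℝ, φ (t + 2) = φ t)
    (k : ℤ) {t : ℝ} (ht1 : 2*(k:ℝ)+1 ≤ t) (ht2 : t ≤ 2*(k:ℝ)+2) : φ t = 2*k + 2 - t := by
  have hper : Function.Periodic φ 2 := h3
  have h := (hper.sub_int_mul_eq (x := t) k).symm
  rw [h, h2 _ ⟨by linarith, by linarith⟩]; ring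

lemma oneD (h1 : ∀ t ∈ Set.Icc (0:ℝ) 1, φ t = t) (h2 : ∀ t ∈ Set.Icc (1:ℝ) 2, φ t = 2 - t)
    (h3 : ∀ t : ℝ, φ (t + 2) = φ t) (s L : ℝ) (hL0 : 0 < L) (hL1 : L ≤ 1) :
    ∃ m p ε₁ b₁ ε₂ b₂ : ℝ,
      0 ≤ m ∧ m + L ≤ 1 ∧ s ≤ p ∧ p ≤ s + L ∧
      (ε₁ = 1 ∨ ε₁ = -1) ∧ (ε₂ = 1 ∨ ε₂ = -1) ∧
      (∀ u ∈ Set.Ioo s p, φ u = ε₁ * u + b₁ ∧ ε₁ * u + b₁ ∈ Set.Ioo m (m + L)) ∧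
      (∀ u ∈ Set.Ioo p (s + L), φ u = ε₂ * u + b₂ ∧ ε₂ * u + b₂ ∈ Set.Ioo m (m + L)) := by
  set k : ℤ := ⌊s/2⌋ with hk
  have hk1 : 2*(k:ℝ) ≤ s := by
    have := Int.floor_le (s/2); rw [← hk] at this; linarith
  have hk2 : s < 2*(k:ℝ) + 2 := by
    have := Int.lt_floor_add_one (s/2); rw [← hk] at this; linarith
  set r : ℝ := s - 2*k with hr
  have hr0 : 0 ≤ r := by simp [hr]; linarith
  have hr2 : r < 2 := by simp [hr]; linarith
  by_cases hA : r + L ≤ 1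
  · refine ⟨r, s + L, 1, -(2*k), 1, 0, hr0, hA, by linarith, le_refl _, Or.inl rfl, Or.inl rfl,
      ?_, ?_⟩
    · intro u hu
      refine ⟨?_, ?_, ?_⟩
      · rw [phi_on_left h1 h3 k (by linarith [hu.1]) (by linarith [hu.2])]; ring
      · have := hu.1; simp [hr]; linarith
      · have := hu.2; simp [hr]; linarith
    · intro u hu; exact absurd hu (by simp)
  · by_cases hB : r ≤ 1
    · -- case 2 : r ≤ 1 < r + L
      refine ⟨1 - L, 2*k + 1, 1, -(2*k), -1, 2*k + 2, by linarith, by linarith,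
        by linarith, by simp [hr] at hA ⊢; linarith, Or.inl rfl, Or.inr rfl, ?_, ?_⟩
      · intro u hu
        refine ⟨?_, ?_, ?_⟩
        · rw [phi_on_left h1 h3 k (by linarith [hu.1]) (by linarith [hu.2])]; ring
        · have := hu.1; simp [hr] at hA; linarith
        · have := hu.2; linarith
      · intro u hu
        refine ⟨?_, ?_, ?_⟩
        · rw [phi_on_right h2 h3 k (by linarith [hu.1]) (by simp [hr] at hu; linarith [hu.2])]
          ring
        · have := hu.2; simp [hr] at this ⊢; linarith
        · have := hu.1; linarith
    · by_cases hC : r + L ≤ 2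
      · -- case 3 : 1 < r, r + L ≤ 2
        refine ⟨2 - r - L, s + L, -1, 2*k + 2, 1, 0, by linarith, by linarith,
          by linarith, le_refl _, Or.inr rfl, Or.inl rfl, ?_, ?_⟩
        · intro u hu
          refine ⟨?_, ?_, ?_⟩
          · rw [phi_on_right h2 h3 k (by simp [hr] at hB; linarith [hu.1])
              (by simp [hr] at hC; linarith [hu.2])]
            ring
          · have := hu.2; simp [hr] at this ⊢; linarith
          · have := hu.1; simp [hr] at this ⊢; linarith
        · intro u hu; exact absurd hu (by simp)
      · -- case 4 : 1 < r, 2 < r + L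
        refine ⟨0, 2*k + 2, -1, 2*k + 2, 1, -(2*k + 2), le_refl _, by linarith,
          by linarith, by simp [hr] at hC; linarith, Or.inr rfl, Or.inl rfl, ?_, ?_⟩
        · intro u hu
          refine ⟨?_, ?_, ?_⟩
          · rw [phi_on_right h2 h3 k (by simp [hr] at hB; linarith [hu.1]) (by linarith [hu.2])]
            ring
          · have := hu.2; linarith
          · have := hu.1; simp [hr] at hB hC ⊢; linarith
        · intro u hu
          refine ⟨?_, ?_, ?_⟩
          · have := phi_on_left h1 h3 (k+1) (t := u) ?_ ?_
            · rw [this]; push_cast; ring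
            · push_cast; linarith [hu.1]
            · push_cast; simp [hr] at hr2; linarith [hu.2]
          · have := hu.1; linarith
          · have := hu.2; simp [hr] at hC ⊢; linarith
end helpers

noncomputable def affEquiv (ε b : ℝ) : ℝ ≃ᵐ ℝ :=
  if ε = 1 then (Homeomorph.addRight b).toMeasurableEquiv
  else (Homeomorph.subLeft b).toMeasurableEquiv

lemma affEquiv_apply {ε : ℝ} (b : ℝ) (hε : ε = 1 ∨ ε = -1) (u : ℝ) :
    affEquiv ε b u = ε * u + b := by
  rcases hε with h | h <;> subst h
  · rw [affEquiv, if_pos rfl]; simp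
  · rw [affEquiv, if_neg (by norm_num)]; simp; ring

lemma affEquiv_measurePreserving (ε b : ℝ) :
    MeasurePreserving (affEquiv ε b) volume volume := by
  unfold affEquiv; split
  · exact measurePreserving_add_right volume b
  · exact Measure.measurePreserving_sub_left volume b

lemma prod_smul_right' {α β : Type*} [MeasurableSpace α] [MeasurableSpace β]
    (μ : Measure α) (ν : Measure β) [SFinite μ] [SFinite ν] (c : ENNReal) (hc : c ≠ ⊤) :
    μ.prod (c • ν) = c • (μ.prod ν) := by
  ext s hs
  rw [Measure.smul_apply, Measure.prod_apply hs, Measure.prod_apply hs]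
  simp only [Measure.smul_apply, smul_eq_mul]
  rw [lintegral_const_mul' _ _ hc]

lemma multiplicity_bound {α : Type*} [MeasurableSpace α] {μ : Measure α}
    {ι : Type*} [Fintype ι] {U : ι → Set α} {Src Tgt : Set α}
    {Ψ : α → α} {T : ι → α → α} {f : α → ℝ}
    (hf0 : ∀ z, 0 ≤ f z) (hfT : IntegrableOn f Tgt μ)
    (hUm : ∀ k, MeasurableSet (U k))
    (hdis : Pairwise (Function.onFun Disjoint U))
    (hUS : ∀ k, U k ⊆ Src)
    (hcov : μ (Src \ ⋃ k, U k) = 0)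
    (hT : ∀ k, MeasurePreserving (T k) μ μ)
    (hTe : ∀ k, MeasurableEmbedding (T k))
    (hagree : ∀ k, ∀ z ∈ U k, Ψ z = T k z)
    (himg : ∀ k, ∀ z ∈ U k, T k z ∈ Tgt) :
    IntegrableOn (fun z => f (Ψ z)) Src μ ∧
      ∫ z in Src, f (Ψ z) ∂μ ≤ (Fintype.card ι : ℝ) * ∫ z in Tgt, f z ∂μ := by
  have himgsub : ∀ k, T k '' U k ⊆ Tgt := fun k => Set.image_subset_iff.2 (himg k)
  have hintT : ∀ k, IntegrableOn (fun z => f (T k z)) (U k) μ := by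
    intro k
    have h1 : IntegrableOn f (T k '' U k) μ := hfT.mono_set (himgsub k)
    have h2 := ((hT k).restrict_image_emb (hTe k) (U k)).map_eq
    rw [IntegrableOn, ← h2] at h1
    exact ((hTe k).integrable_map_iff).1 h1
  have hintΨ : ∀ k, IntegrableOn (fun z => f (Ψ z)) (U k) μ := fun k =>
    (hintT k).congr_fun (fun z hz => by rw [hagree k z hz]) (hUm k)
  have hsub : (⋃ k, U k) ⊆ Src := Set.iUnion_subset hUS
  have hae : Src =ᵐ[μ] ⋃ k, U k :=
    (MeasureTheory.ae_eq_set).2 ⟨hcov, by rw [Set.diff_eq_empty.2 hsub]; simp⟩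
  have hres : μ.restrict Src = μ.restrict (⋃ k, U k) := Measure.restrict_congr_set hae
  constructor
  · rw [IntegrableOn, hres]
    exact (integrableOn_finite_iUnion).2 hintΨ
  · have hU : (⋃ k, U k) = ⋃ k ∈ Finset.univ, U k := by simp
    calc ∫ z in Src, f (Ψ z) ∂μ = ∫ z in ⋃ k, U k, f (Ψ z) ∂μ := by rw [IntegrableOn] at *; rw [hres]
      _ = ∑ k : ι, ∫ z in U k, f (Ψ z) ∂μ := by
            rw [hU]
            exact integral_biUnion_finset Finset.univ (fun k _ => hUm k)
              (fun k _ k' _ h => hdis h) (fun k _ => hintΨ k)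
      _ ≤ ∑ k : ι, ∫ z in Tgt, f z ∂μ := by
            refine Finset.sum_le_sum fun k _ => ?_
            calc ∫ z in U k, f (Ψ z) ∂μ = ∫ z in U k, f (T k z) ∂μ :=
                  setIntegral_congr_fun (hUm k) (fun z hz => by rw [hagree k z hz])
              _ = ∫ z in T k '' U k, f z ∂μ := ((hT k).setIntegral_image_emb (hTe k) f (U k)).symm
              _ ≤ ∫ z in Tgt, f z ∂μ :=
                  setIntegral_mono_set hfT (Filter.Eventually.of_forall fun z => hf0 z)
                    ((himgsub k).eventuallyLE)
      _ = (Fintype.card ι : ℝ) * ∫ z in Tgt, f z ∂μ := by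
            rw [Finset.sum_const, Finset.card_univ, nsmul_eq_mul]

lemma tripleFubini {X : Type*} [MeasureSpace X] [SigmaFinite (volume : Measure X)]
    (g : ℝ × (X × X) → ℝ) (I : Set ℝ) (C1 C2 : Set X)
    (hg : Integrable g (((volume : Measure ℝ).restrict I).prod
      (((volume : Measure X).restrict C1).prod ((volume : Measure X).restrict C2)))) :
    ∫ z in I ×ˢ C1 ×ˢ C2, g z
        ∂((volume : Measure ℝ).prod ((volume : Measure X).prod (volume : Measure X)))
      = ∫ t in I, ∫ x in C1, ∫ y in C2, g (t, x, y) := by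
  have hres : (((volume : Measure ℝ).prod ((volume : Measure X).prod volume)).restrict
      (I ×ˢ C1 ×ˢ C2))
      = ((volume : Measure ℝ).restrict I).prod
        (((volume : Measure X).restrict C1).prod ((volume : Measure X).restrict C2)) := by
    rw [Measure.prod_restrict, Measure.prod_restrict]
  rw [show (∫ z in I ×ˢ C1 ×ˢ C2, g z
      ∂((volume : Measure ℝ).prod ((volume : Measure X).prod volume)))
    = ∫ z, g z ∂(((volume : Measure ℝ).restrict I).prod
      (((volume : Measure X).restrict C1).prod ((volume : Measure X).restrict C2))) from by
    rw [← hres]]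
  rw [integral_prod g hg]
  refine integral_congr_ae ?_
  filter_upwards [hg.prod_right_ae] with t ht
  exact integral_prod _ ht

set_option maxHeartbeats 1000000 in
/-- For every parabolic box of scale `ρ ≤ 1`, the oscillation integral of the reflection
extension `â` is controlled, up to the multiplicity factor `2^{2d+1}`, by the oscillation
integral of `a` over a parabolic box of the same scale contained in `[0,1]^{d+1}`. -/
theorem reflection_oscillation_bound (d : ℕ) (φ : ℝ → ℝ)
    (h1 : ∀ t ∈ Set.Icc (0:ℝ) 1, φ t = t)
    (h2 : ∀ t ∈ Set.Icc (1:ℝ) 2, φ t = 2 - t)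
    (h3 : ∀ t : ℝ, φ (t + 2) = φ t)
    (a : ℝ × (Fin d → ℝ) → ℝ) (ha : IntegrableOn a (unitBox d))
    (ρ : ℝ) (hρ0 : 0 < ρ) (hρ : ρ ≤ 1) (s : ℝ) (c : Fin d → ℝ) :
    ∃ t₀ : ℝ, ∃ c₁ : Fin d → ℝ,
      Set.Ioo (t₀ - ρ ^ 2 / 2) (t₀ + ρ ^ 2 / 2) ⊆ Set.Icc (0:ℝ) 1 ∧
      (∀ i, Set.Ioo (c₁ i) (c₁ i + ρ) ⊆ Set.Icc (0:ℝ) 1) ∧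
      (∫ t in Set.Ioo s (s + ρ ^ 2), ∫ x in cube d c ρ, ∫ y in cube d c ρ,
          |a (φ t, fun i => φ (x i)) - a (φ t, fun i => φ (y i))|)
        ≤ 2 ^ (2 * d + 1) *
          ∫ t in Set.Ioo (t₀ - ρ ^ 2 / 2) (t₀ + ρ ^ 2 / 2),
            ∫ x in cube d c₁ ρ, ∫ y in cube d c₁ ρ, |a (t, x) - a (t, y)| := by
  classical
  have hL0 : 0 < ρ^2 := by positivity
  have hL1 : ρ^2 ≤ 1 := by nlinarith
  obtain ⟨m, pt, e1, f1, e2, f2, hm0, hm1, hpt1, hpt2, he1, he2, hP1, hP2⟩ :=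
    oneD h1 h2 h3 s (ρ^2) hL0 hL1
  choose mS pS g1 k1 g2 k2 hS0 hS1 hps1 hps2 hg1 hg2 hQ1 hQ2 using
    fun i : Fin d => oneD h1 h2 h3 (c i) ρ hρ0 hρ
  have hshift1 : m + ρ^2/2 - ρ^2/2 = m := by ring
  have hshift2 : m + ρ^2/2 + ρ^2/2 = m + ρ^2 := by ring
  refine ⟨m + ρ^2/2, mS, ?_, ?_, ?_⟩
  · rw [hshift1, hshift2]
    exact fun u hu => ⟨by linarith [hu.1], by linarith [hu.2]⟩
  · intro i u hu
    exact ⟨by linarith [hS0 i, hu.1], by linarith [hS1 i, hu.2]⟩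
  rw [hshift1, hshift2]
  -- notation
  set PP : Measure (ℝ × ((Fin d → ℝ) × (Fin d → ℝ))) :=
    (volume : Measure ℝ).prod ((volume : Measure (Fin d → ℝ)).prod volume) with hPP
  set f : ℝ × ((Fin d → ℝ) × (Fin d → ℝ)) → ℝ :=
    fun z => |a (z.1, z.2.1) - a (z.1, z.2.2)| with hfdef
  set Ψ : ℝ × ((Fin d → ℝ) × (Fin d → ℝ)) → ℝ × ((Fin d → ℝ) × (Fin d → ℝ)) :=
    fun z => (φ z.1, fun i => φ (z.2.1 i), fun i => φ (z.2.2 i)) with hΨdef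
  set Jt : Bool → Set ℝ := fun b => if b then Ioo pt (s + ρ^2) else Ioo s pt with hJtdef
  set PS : Fin d → Bool → Set ℝ :=
    fun i b => if b then Ioo (pS i) (c i + ρ) else Ioo (c i) (pS i) with hPSdef
  set BB : (Fin d → Bool) → Set (Fin d → ℝ) :=
    fun σ => univ.pi fun i => PS i (σ i) with hBBdef
  set U : Bool × (Fin d → Bool) × (Fin d → Bool) → Set (ℝ × ((Fin d → ℝ) × (Fin d → ℝ))) :=
    fun k => Jt k.1 ×ˢ BB k.2.1 ×ˢ BB k.2.2 with hUdef
  set εt : Bool → ℝ := fun b => if b then e2 else e1 with hεtdef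
  set βt : Bool → ℝ := fun b => if b then f2 else f1 with hβtdef
  set εs : Fin d → Bool → ℝ := fun i b => if b then g2 i else g1 i with hεsdef
  set βs : Fin d → Bool → ℝ := fun i b => if b then k2 i else k1 i with hβsdef
  set Src : Set (ℝ × ((Fin d → ℝ) × (Fin d → ℝ))) :=
    Ioo s (s + ρ^2) ×ˢ cube d c ρ ×ˢ cube d c ρ with hSrcdef
  set Tgt : Set (ℝ × ((Fin d → ℝ) × (Fin d → ℝ))) :=
    Ioo m (m + ρ^2) ×ˢ cube d mS ρ ×ˢ cube d mS ρ with hTgtdef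
  -- basic facts about the pieces
  have hεt : ∀ b, εt b = 1 ∨ εt b = -1 := by
    intro b; cases b
    · simpa [hεtdef] using he1
    · simpa [hεtdef] using he2
  have hεs : ∀ i b, εs i b = 1 ∨ εs i b = -1 := by
    intro i b; cases b
    · simpa [hεsdef] using hg1 i
    · simpa [hεsdef] using hg2 i
  have hJmem : ∀ b, ∀ u ∈ Jt b,
      φ u = εt b * u + βt b ∧ εt b * u + βt b ∈ Ioo m (m + ρ^2) := by
    intro b; cases b
    · simpa [hJtdef, hεtdef, hβtdef] using hP1
    · simpa [hJtdef, hεtdef, hβtdef] using hP2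
  have hPSmem : ∀ i b, ∀ u ∈ PS i b,
      φ u = εs i b * u + βs i b ∧ εs i b * u + βs i b ∈ Ioo (mS i) (mS i + ρ) := by
    intro i b; cases b
    · simpa [hPSdef, hεsdef, hβsdef] using hQ1 i
    · simpa [hPSdef, hεsdef, hβsdef] using hQ2 i
  -- measurability of pieces
  have hJtm : ∀ b, MeasurableSet (Jt b) := by
    intro b; cases b <;> simp [hJtdef] <;> exact measurableSet_Ioo
  have hPSm : ∀ i b, MeasurableSet (PS i b) := by
    intro i b; cases b <;> simp [hPSdef] <;> exact measurableSet_Ioo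
  have hBBm : ∀ σ, MeasurableSet (BB σ) :=
    fun σ => MeasurableSet.univ_pi fun i => hPSm i (σ i)
  have hUm : ∀ k, MeasurableSet (U k) :=
    fun k => (hJtm k.1).prod ((hBBm k.2.1).prod (hBBm k.2.2))
  -- disjointness
  have hdisJ : ∀ {b b' : Bool}, b ≠ b' → Disjoint (Jt b) (Jt b') := by
    intro b b' hbb
    rw [Set.disjoint_left]
    intro u h h'
    cases b <;> cases b'
    · exact hbb rfl
    · simp [hJtdef] at h h'; linarith [h.2, h'.1]
    · simp [hJtdef] at h h'; linarith [h.1, h'.2]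
    · exact hbb rfl
  have hdisPS : ∀ i {b b' : Bool}, b ≠ b' → Disjoint (PS i b) (PS i b') := by
    intro i b b' hbb
    rw [Set.disjoint_left]
    intro u h h'
    cases b <;> cases b'
    · exact hbb rfl
    · simp [hPSdef] at h h'; linarith [h.2, h'.1]
    · simp [hPSdef] at h h'; linarith [h.1, h'.2]
    · exact hbb rfl
  have hdisB : ∀ {σ σ' : Fin d → Bool}, σ ≠ σ' → Disjoint (BB σ) (BB σ') := by
    intro σ σ' hσ
    obtain ⟨i, hi⟩ := Function.ne_iff.1 hσ
    rw [Set.disjoint_left]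
    intro x hx hx'
    exact Set.disjoint_left.1 (hdisPS i hi) (hx i (mem_univ i)) (hx' i (mem_univ i))
  have hdisU : Pairwise (Function.onFun Disjoint U) := by
    intro k k' hkk
    have hcomp : k.1 ≠ k'.1 ∨ k.2.1 ≠ k'.2.1 ∨ k.2.2 ≠ k'.2.2 := by
      by_contra hcon; push_neg at hcon
      exact hkk (Prod.ext hcon.1 (Prod.ext hcon.2.1 hcon.2.2))
    rw [Function.onFun, Set.disjoint_left]
    rintro ⟨t, x, y⟩ hz hz'
    rcases hcomp with h | h | h
    · exact Set.disjoint_left.1 (hdisJ h) hz.1 hz'.1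
    · exact Set.disjoint_left.1 (hdisB h) hz.2.1 hz'.2.1
    · exact Set.disjoint_left.1 (hdisB h) hz.2.2 hz'.2.2
  -- pieces sit inside the source box
  have hJS : ∀ b, Jt b ⊆ Ioo s (s + ρ^2) := by
    intro b; cases b
    · simp only [hJtdef, if_neg Bool.false_ne_true]
      exact Set.Ioo_subset_Ioo le_rfl hpt2
    · simp only [hJtdef, if_pos rfl]
      exact Set.Ioo_subset_Ioo hpt1 le_rfl
  have hPSS : ∀ i b, PS i b ⊆ Ioo (c i) (c i + ρ) := by
    intro i b; cases b
    · simp only [hPSdef, if_neg Bool.false_ne_true]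
      exact Set.Ioo_subset_Ioo le_rfl (hps2 i)
    · simp only [hPSdef, if_pos rfl]
      exact Set.Ioo_subset_Ioo (hps1 i) le_rfl
  have hBS : ∀ σ, BB σ ⊆ cube d c ρ := by
    intro σ x hx i _
    exact hPSS i (σ i) (hx i (mem_univ i))
  have hUS : ∀ k, U k ⊆ Src :=
    fun k => Set.prod_mono (hJS k.1) (Set.prod_mono (hBS k.2.1) (hBS k.2.2))
  -- a.e. cover of the source box by the pieces
  have hpick : ∀ (α β p u : ℝ), α ≤ p → p ≤ β → u ∈ Ioo α β → u ≠ p →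
      (u ∈ Ioo α p ∨ u ∈ Ioo p β) := by
    intro α β p u hap hpb hu hne
    rcases lt_or_gt_of_ne hne with h | h
    · exact Or.inl ⟨hu.1, h⟩
    · exact Or.inr ⟨h, hu.2⟩
  have hcovsub : Src \ (⋃ k, U k) ⊆
      ({pt} ×ˢ (univ : Set ((Fin d → ℝ) × (Fin d → ℝ)))) ∪
      ((univ : Set ℝ) ×ˢ ((⋃ i, {x : Fin d → ℝ | x i = pS i}) ×ˢ (univ : Set (Fin d → ℝ)))) ∪
      ((univ : Set ℝ) ×ˢ ((univ : Set (Fin d → ℝ)) ×ˢ (⋃ i, {y : Fin d → ℝ | y i = pS i}))) := by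
    rintro ⟨t, x, y⟩ ⟨hzS, hzU⟩
    by_contra hN
    simp only [mem_union, not_or, mem_prod, mem_singleton_iff, mem_univ, and_true, true_and,
      mem_iUnion, mem_setOf_eq, not_exists] at hN
    obtain ⟨⟨hN1, hN2⟩, hN3⟩ := hN
    apply hzU
    have hxt := hpick s (s + ρ^2) pt t hpt1 hpt2 hzS.1 hN1
    have hxx : ∀ i, x i ∈ Ioo (c i) (pS i) ∨ x i ∈ Ioo (pS i) (c i + ρ) := fun i =>
      hpick _ _ _ _ (hps1 i) (hps2 i) (hzS.2.1 i (mem_univ i)) (hN2 i)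
    have hyy : ∀ i, y i ∈ Ioo (c i) (pS i) ∨ y i ∈ Ioo (pS i) (c i + ρ) := fun i =>
      hpick _ _ _ _ (hps1 i) (hps2 i) (hzS.2.2 i (mem_univ i)) (hN3 i)
    refine mem_iUnion.2 ⟨⟨if t ∈ Ioo s pt then false else true,
      fun i => if x i ∈ Ioo (c i) (pS i) then false else true,
      fun i => if y i ∈ Ioo (c i) (pS i) then false else true⟩, ?_, ?_, ?_⟩
    · by_cases h : t ∈ Ioo s pt
      · simpa [hJtdef, h] using h
      · simpa [hJtdef, h] using hxt.resolve_left h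
    · intro i _
      by_cases h : x i ∈ Ioo (c i) (pS i)
      · simpa [hPSdef, h] using h
      · simpa [hPSdef, h] using (hxx i).resolve_left h
    · intro i _
      by_cases h : y i ∈ Ioo (c i) (pS i)
      · simpa [hPSdef, h] using h
      · simpa [hPSdef, h] using (hyy i).resolve_left h
  have hhyp : ∀ i, (volume : Measure (Fin d → ℝ)) {x : Fin d → ℝ | x i = pS i} = 0 := by
    intro i
    rw [MeasureTheory.volume_pi]
    exact Measure.pi_hyperplane (fun _ : Fin d => (volume : Measure ℝ)) i (pS i)
  have hcov : PP (Src \ ⋃ k, U k) = 0 := by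
    refine measure_mono_null hcovsub ?_
    refine measure_union_null (measure_union_null ?_ ?_) ?_
    · rw [hPP, Measure.prod_prod]
      simp
    · rw [hPP, Measure.prod_prod, Measure.prod_prod, measure_iUnion_null hhyp]
      simp
    · rw [hPP, Measure.prod_prod, Measure.prod_prod, measure_iUnion_null hhyp]
      simp
  -- the piecewise affine unfolding maps
  set T : Bool × (Fin d → Bool) × (Fin d → Bool) →
      (ℝ × ((Fin d → ℝ) × (Fin d → ℝ))) ≃ᵐ (ℝ × ((Fin d → ℝ) × (Fin d → ℝ))) :=
    fun k => (affEquiv (εt k.1) (βt k.1)).prodCongr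
      ((MeasurableEquiv.piCongrRight fun i =>
          affEquiv (εs i (k.2.1 i)) (βs i (k.2.1 i))).prodCongr
       (MeasurableEquiv.piCongrRight fun i =>
          affEquiv (εs i (k.2.2 i)) (βs i (k.2.2 i)))) with hTdef
  have hTmp : ∀ k, MeasurePreserving (⇑(T k)) PP PP := by
    intro k
    exact (affEquiv_measurePreserving _ _).prod
      ((volume_preserving_pi fun i => affEquiv_measurePreserving _ _).prod
       (volume_preserving_pi fun i => affEquiv_measurePreserving _ _))
  have hTapp : ∀ k (z : ℝ × ((Fin d → ℝ) × (Fin d → ℝ))),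
      T k z = (affEquiv (εt k.1) (βt k.1) z.1,
        fun i => affEquiv (εs i (k.2.1 i)) (βs i (k.2.1 i)) (z.2.1 i),
        fun i => affEquiv (εs i (k.2.2 i)) (βs i (k.2.2 i)) (z.2.2 i)) := fun k z => rfl
  have hagree : ∀ k, ∀ z ∈ U k, Ψ z = T k z := by
    rintro k ⟨t, x, y⟩ hz
    rw [hTapp]
    refine Prod.ext ?_ (Prod.ext ?_ ?_)
    · show φ t = _
      rw [affEquiv_apply _ (hεt k.1)]
      exact (hJmem k.1 t hz.1).1
    · funext i
      show φ (x i) = affEquiv (εs i (k.2.1 i)) (βs i (k.2.1 i)) (x i)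
      rw [affEquiv_apply _ (hεs i (k.2.1 i))]
      exact (hPSmem i (k.2.1 i) (x i) (hz.2.1 i (mem_univ i))).1
    · funext i
      show φ (y i) = affEquiv (εs i (k.2.2 i)) (βs i (k.2.2 i)) (y i)
      rw [affEquiv_apply _ (hεs i (k.2.2 i))]
      exact (hPSmem i (k.2.2 i) (y i) (hz.2.2 i (mem_univ i))).1
  have himg : ∀ k, ∀ z ∈ U k, T k z ∈ Tgt := by
    rintro k ⟨t, x, y⟩ hz
    rw [hTapp]
    refine ⟨?_, ?_, ?_⟩
    · rw [affEquiv_apply _ (hεt k.1)]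
      exact (hJmem k.1 t hz.1).2
    · intro i _
      show affEquiv (εs i (k.2.1 i)) (βs i (k.2.1 i)) (x i) ∈ Ioo (mS i) (mS i + ρ)
      rw [affEquiv_apply _ (hεs i (k.2.1 i))]
      exact (hPSmem i (k.2.1 i) (x i) (hz.2.1 i (mem_univ i))).2
    · intro i _
      show affEquiv (εs i (k.2.2 i)) (βs i (k.2.2 i)) (y i) ∈ Ioo (mS i) (mS i + ρ)
      rw [affEquiv_apply _ (hεs i (k.2.2 i))]
      exact (hPSmem i (k.2.2 i) (y i) (hz.2.2 i (mem_univ i))).2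
  -- integrability of f on the target box
  have hJsub : Ioo m (m + ρ^2) ⊆ Ioo (0:ℝ) 1 :=
    fun u hu => ⟨lt_of_le_of_lt hm0 hu.1, lt_of_lt_of_le hu.2 hm1⟩
  have hCsub : cube d mS ρ ⊆ cube d (fun _ => 0) 1 := by
    intro x hx i _
    have h := hx i (mem_univ i)
    exact ⟨lt_of_le_of_lt (hS0 i) h.1, by have := hS1 i; have := h.2; simp; linarith⟩
  have haT : Integrable a (((volume : Measure ℝ).restrict (Ioo m (m + ρ^2))).prod
      ((volume : Measure (Fin d → ℝ)).restrict (cube d mS ρ))) := by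
    rw [Measure.prod_restrict, ← Measure.volume_eq_prod]
    exact ha.mono_set (by rw [unitBox]; exact Set.prod_mono hJsub hCsub)
  have hCfin : (volume : Measure (Fin d → ℝ)) (cube d mS ρ) ≠ ⊤ := by
    rw [cube, volume_pi_pi]
    refine (ENNReal.prod_lt_top ?_).ne
    intro i _
    simp [Real.volume_Ioo]
  have hres3 : PP.restrict Tgt = ((volume : Measure ℝ).restrict (Ioo m (m + ρ^2))).prod
      (((volume : Measure (Fin d → ℝ)).restrict (cube d mS ρ)).prod
       ((volume : Measure (Fin d → ℝ)).restrict (cube d mS ρ))) := by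
    rw [hPP, hTgtdef, Measure.prod_restrict, Measure.prod_restrict]
  have hA : Integrable (fun z : ℝ × ((Fin d → ℝ) × (Fin d → ℝ)) => a (z.1, z.2.1))
      (PP.restrict Tgt) := by
    rw [hres3]
    have hq : Measurable fun z : ℝ × ((Fin d → ℝ) × (Fin d → ℝ)) => (z.1, z.2.1) :=
      measurable_fst.prodMk (measurable_snd.fst)
    have hmapeq : Measure.map (fun z : ℝ × ((Fin d → ℝ) × (Fin d → ℝ)) => (z.1, z.2.1))
        (((volume : Measure ℝ).restrict (Ioo m (m + ρ^2))).prod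
          (((volume : Measure (Fin d → ℝ)).restrict (cube d mS ρ)).prod
           ((volume : Measure (Fin d → ℝ)).restrict (cube d mS ρ))))
        = ((volume : Measure (Fin d → ℝ)) (cube d mS ρ)) •
            (((volume : Measure ℝ).restrict (Ioo m (m + ρ^2))).prod
             ((volume : Measure (Fin d → ℝ)).restrict (cube d mS ρ))) := by
      have h0 : (fun z : ℝ × ((Fin d → ℝ) × (Fin d → ℝ)) => (z.1, z.2.1))
          = Prod.map id Prod.fst := rfl
      rw [h0, ← Measure.map_prod_map _ _ measurable_id measurable_fst, Measure.map_id,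
        Measure.map_fst_prod, Measure.restrict_apply_univ,
        prod_smul_right' _ _ _ hCfin]
    have h2 : Integrable a (((volume : Measure (Fin d → ℝ)) (cube d mS ρ)) •
        (((volume : Measure ℝ).restrict (Ioo m (m + ρ^2))).prod
         ((volume : Measure (Fin d → ℝ)).restrict (cube d mS ρ)))) :=
      haT.smul_measure hCfin
    rw [← hmapeq] at h2
    exact (integrable_map_measure h2.aestronglyMeasurable hq.aemeasurable).1 h2
  have hB : Integrable (fun z : ℝ × ((Fin d → ℝ) × (Fin d → ℝ)) => a (z.1, z.2.2))
      (PP.restrict Tgt) := by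
    rw [hres3]
    have hq : Measurable fun z : ℝ × ((Fin d → ℝ) × (Fin d → ℝ)) => (z.1, z.2.2) :=
      measurable_fst.prodMk (measurable_snd.snd)
    have hmapeq : Measure.map (fun z : ℝ × ((Fin d → ℝ) × (Fin d → ℝ)) => (z.1, z.2.2))
        (((volume : Measure ℝ).restrict (Ioo m (m + ρ^2))).prod
          (((volume : Measure (Fin d → ℝ)).restrict (cube d mS ρ)).prod
           ((volume : Measure (Fin d → ℝ)).restrict (cube d mS ρ))))
        = ((volume : Measure (Fin d → ℝ)) (cube d mS ρ)) •
            (((volume : Measure ℝ).restrict (Ioo m (m + ρ^2))).prod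
             ((volume : Measure (Fin d → ℝ)).restrict (cube d mS ρ))) := by
      have h0 : (fun z : ℝ × ((Fin d → ℝ) × (Fin d → ℝ)) => (z.1, z.2.2))
          = Prod.map id Prod.snd := rfl
      rw [h0, ← Measure.map_prod_map _ _ measurable_id measurable_snd, Measure.map_id,
        Measure.map_snd_prod, Measure.restrict_apply_univ,
        prod_smul_right' _ _ _ hCfin]
    have h2 : Integrable a (((volume : Measure (Fin d → ℝ)) (cube d mS ρ)) •
        (((volume : Measure ℝ).restrict (Ioo m (m + ρ^2))).prod
         ((volume : Measure (Fin d → ℝ)).restrict (cube d mS ρ)))) :=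
      haT.smul_measure hCfin
    rw [← hmapeq] at h2
    exact (integrable_map_measure h2.aestronglyMeasurable hq.aemeasurable).1 h2
  have hfT : IntegrableOn f Tgt PP := (hA.sub hB).abs
  -- the multiplicity bound
  obtain ⟨hintSrc, hbound⟩ :=
    multiplicity_bound (μ := PP) (U := U) (Src := Src) (Tgt := Tgt) (Ψ := Ψ)
      (T := fun k => ⇑(T k)) (f := f) (fun z => abs_nonneg _) hfT hUm hdisU hUS hcov
      hTmp (fun k => (T k).measurableEmbedding) hagree himg
  -- Fubini on both sides
  have hresS : PP.restrict Src = ((volume : Measure ℝ).restrict (Ioo s (s + ρ^2))).prod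
      (((volume : Measure (Fin d → ℝ)).restrict (cube d c ρ)).prod
       ((volume : Measure (Fin d → ℝ)).restrict (cube d c ρ))) := by
    rw [hPP, hSrcdef, Measure.prod_restrict, Measure.prod_restrict]
  have hgS : Integrable (fun z => f (Ψ z))
      (((volume : Measure ℝ).restrict (Ioo s (s + ρ^2))).prod
        (((volume : Measure (Fin d → ℝ)).restrict (cube d c ρ)).prod
         ((volume : Measure (Fin d → ℝ)).restrict (cube d c ρ)))) := by
    rw [← hresS]; exact hintSrc
  have hgT : Integrable f
      (((volume : Measure ℝ).restrict (Ioo m (m + ρ^2))).prod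
        (((volume : Measure (Fin d → ℝ)).restrict (cube d mS ρ)).prod
         ((volume : Measure (Fin d → ℝ)).restrict (cube d mS ρ)))) := by
    rw [← hres3]; exact hfT
  have hgoalL : (∫ t in Set.Ioo s (s + ρ ^ 2), ∫ x in cube d c ρ, ∫ y in cube d c ρ,
      |a (φ t, fun i => φ (x i)) - a (φ t, fun i => φ (y i))|)
      = ∫ z in Src, f (Ψ z) ∂PP := by
    have h := tripleFubini (X := Fin d → ℝ) (fun z => f (Ψ z)) (Ioo s (s + ρ^2)) (cube d c ρ) (cube d c ρ) hgS
    exact h.symm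
  have hgoalR : (∫ t in Set.Ioo m (m + ρ ^ 2), ∫ x in cube d mS ρ, ∫ y in cube d mS ρ,
      |a (t, x) - a (t, y)|) = ∫ z in Tgt, f z ∂PP := by
    have h := tripleFubini (X := Fin d → ℝ) f (Ioo m (m + ρ^2)) (cube d mS ρ) (cube d mS ρ) hgT
    exact h.symm
  rw [hgoalL, hgoalR]
  have hcard : ((Fintype.card (Bool × (Fin d → Bool) × (Fin d → Bool))) : ℝ)
      = 2 ^ (2 * d + 1) := by
    simp only [Fintype.card_prod, Fintype.card_fun, Fintype.card_bool, Fintype.card_fin]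
    push_cast
    ring
  calc ∫ z in Src, f (Ψ z) ∂PP
      ≤ (Fintype.card (Bool × (Fin d → Bool) × (Fin d → Bool)) : ℝ) * ∫ z in Tgt, f z ∂PP :=
        hbound
    _ = 2 ^ (2 * d + 1) * ∫ z in Tgt, f z ∂PP := by rw [hcard]
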